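/- Let L be a Lie ring whose derived ideal L' = [L, L] is abelian. Let a be a subring of L that is an additive complement of L' (i.e., L = L' + a and L' ∩ a = 0), and suppose a₀ ∈ a is such that ad_{a₀} restricts to a bijection of L' onto itself. Then a = C_L(a₀). -/
import Mathlib


/-- Let `L` be a Lie ring with abelian derived ideal `L'`, let `a` be a subring
of `L` which is an additive complement of `L'` (`L = L' + a` and `L' ∩ a = 0`), and suppose
`a₀ ∈ a` is such that `ad_{a₀}` restricts to a bijection of `L'` onto itself.
Then `a = C_L(a₀)`. -/
theorem stmt_5 {L : Type*} [LieRing L]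
    (habel : ∀ a ∈ LieAlgebra.derivedSeries ℤ L 1, ∀ b ∈ LieAlgebra.derivedSeries ℤ L 1,
      ⁅a, b⁆ = (0 : L))
    (a : LieSubalgebra ℤ L)
    (hsum : ∀ y : L, ∃ z ∈ LieAlgebra.derivedSeries ℤ L 1, ∃ w ∈ a, y = z + w)
    (hint : ∀ y ∈ LieAlgebra.derivedSeries ℤ L 1, y ∈ a → y = 0)
    (a₀ : L) (ha₀ : a₀ ∈ a)
    (hmaps : ∀ z ∈ LieAlgebra.derivedSeries ℤ L 1, ⁅a₀, z⁆ ∈ LieAlgebra.derivedSeries ℤ L 1)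
    (hinj : ∀ z ∈ LieAlgebra.derivedSeries ℤ L 1, ∀ w ∈ LieAlgebra.derivedSeries ℤ L 1,
      ⁅a₀, z⁆ = ⁅a₀, w⁆ → z = w)
    (hsurj : ∀ w ∈ LieAlgebra.derivedSeries ℤ L 1,
      ∃ z ∈ LieAlgebra.derivedSeries ℤ L 1, ⁅a₀, z⁆ = w) :
    (a : Set L) = {y : L | ⁅a₀, y⁆ = 0} := by

  have hbr : ∀ x y : L, ⁅x, y⁆ ∈ LieAlgebra.derivedSeries ℤ L 1 := by
    intro x y
    rw [LieAlgebra.derivedSeries_def, LieAlgebra.derivedSeriesOfIdeal_succ]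
    exact LieSubmodule.lie_mem_lie (LieSubmodule.mem_top x) (LieSubmodule.mem_top y)
  have hcent : ∀ x ∈ a, ⁅a₀, x⁆ = 0 := fun x hx =>
    hint _ (hbr a₀ x) (a.lie_mem ha₀ hx)
  ext y
  constructor
  · intro hy
    exact hcent y hy
  · intro hy
    obtain ⟨z, hz, w, hw, rfl⟩ := hsum y
    have h0 : ⁅a₀, z⁆ = 0 := by
      have := hcent w hw
      simpa [lie_add, this] using hy
    have : z = 0 := hinj z hz 0 (LieAlgebra.derivedSeries ℤ L 1).zero_mem (by simp [h0])
    simpa [this] using hw
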